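/- arXiv:1002.3203 — 3 statements merged into one kernel-verified Lean document; each statement's English description precedes it below -/
import Mathlib

section
/- Let N be a finitely generated nilpotent group. Then N is either virtually abelian or N is not virtually RFRS. (Equivalently: if a finitely generated nilpotent group is virtually RFRS, then it is virtually abelian.) -/
/-- An RFRS chain for a group `G`: an exhaustive filtration `G = G₀ ≥ G₁ ≥ ⋯` of
normal finite-index subgroups with trivial intersection such that every element of `Gᵢ`
whose image in the abelianization of `Gᵢ` is torsion lies in `Gᵢ₊₁`. -/
def IsRFRSChain {G : Type*} [Group G] (f : ℕ → Subgroup G) : Prop :=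
  f 0 = ⊤ ∧
  (∀ i, (f i).Normal) ∧
  (∀ i, (f i).FiniteIndex) ∧
  (∀ i, f (i + 1) ≤ f i) ∧
  (⨅ i, f i) = ⊥ ∧
  ∀ i, ∀ g : f i, IsOfFinOrder (Abelianization.of g) → (g : G) ∈ f (i + 1)

/-- A group is RFRS if it admits an RFRS chain. -/
def IsRFRS (G : Type*) [Group G] : Prop :=
  ∃ f : ℕ → Subgroup G, IsRFRSChain f

open scoped commutatorElement

theorem rfrs_nilpotent_comm {G : Type*} [Group G] [Group.IsNilpotent G]
    (h : IsRFRS G) : ∀ x y : G, x * y = y * x := by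
  have hbot : commutator G = ⊥ := by
    by_contra hne
    -- minimal n with lower central series trivial
    have hex : ∃ n, (⊤ : Subgroup G).lowerCentralSeries n = ⊥ :=
      Subgroup.nilpotent_iff_lowerCentralSeries.mp ‹_›
    classical
    obtain ⟨c, hc, hmin⟩ : ∃ c, (⊤ : Subgroup G).lowerCentralSeries c = ⊥ ∧
        ∀ m < c, (⊤ : Subgroup G).lowerCentralSeries m ≠ ⊥ :=
      ⟨Nat.find hex, Nat.find_spec hex, fun m hm => Nat.find_min hex hm⟩
    have h1 : (⊤ : Subgroup G).lowerCentralSeries 1 ≠ ⊥ := by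
      rwa [Subgroup.top_lowerCentralSeries_one]
    have h2c : 2 ≤ c := by
      by_contra hlt
      push_neg at hlt
      have hle : (⊤ : Subgroup G).lowerCentralSeries 1 ≤ (⊤ : Subgroup G).lowerCentralSeries c :=
        Subgroup.lowerCentralSeries_antitone ⊤ (by omega)
      rw [hc] at hle
      exact h1 (le_bot_iff.mp hle)
    obtain ⟨k, rfl⟩ : ∃ k, c = k + 1 := ⟨c - 1, by omega⟩
    have hk1 : 1 ≤ k := by omega
    have hkne : (⊤ : Subgroup G).lowerCentralSeries k ≠ ⊥ := hmin k (by omega)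
    obtain ⟨⟨z, hzmem⟩, hzne⟩ := Subgroup.ne_bot_iff_exists_ne_one.mp hkne
    have hzne1 : z ≠ 1 := by simpa [Subtype.ext_iff] using hzne
    -- z is central
    have hzc : ∀ g : G, Commute z g := by
      intro g
      have : ⁅z, g⁆ ∈ (⊤ : Subgroup G).lowerCentralSeries (k + 1) := by
        rw [Subgroup.lowerCentralSeries_succ]
        exact Subgroup.commutator_mem_commutator hzmem (Subgroup.mem_top g)
      rw [hc] at this
      exact commutatorElement_eq_one_iff_commute.mp (Subgroup.mem_bot.mp this)
    -- z is in the commutator subgroup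
    have hzcom : z ∈ commutator G := by
      have := (⊤ : Subgroup G).lowerCentralSeries_antitone hk1
      rw [Subgroup.top_lowerCentralSeries_one] at this
      exact this hzmem
    obtain ⟨f, h0, hnorm, hfin, _hdec, hinf, hstep⟩ := h
    have hall : ∀ i, z ∈ f i := by
      intro i
      induction i with
      | zero => rw [h0]; exact Subgroup.mem_top z
      | succ i ih =>
        haveI := hnorm i
        haveI := hfin i
        set φ : (f i) →* Abelianization (f i) := Abelianization.of
        have key : ∀ (n : ℕ) (g₀ : G), g₀⁻¹ * z ^ n * g₀ ∈ f i → g₀⁻¹ * z ^ n * g₀ = z ^ n := by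
          intro n g₀ _
          rw [mul_assoc, ((hzc g₀).pow_left n).eq, ← mul_assoc, inv_mul_cancel, one_mul]
        have htr := MonoidHom.transfer_eq_pow φ z key
        have hker : MonoidHom.transfer φ z = 1 :=
          Abelianization.commutator_subset_ker (MonoidHom.transfer φ) hzcom
        rw [htr] at hker
        have hpow : (Abelianization.of (⟨z, ih⟩ : f i)) ^ (f i).index = 1 := by
          rw [← map_pow]
          have : (⟨z, ih⟩ : f i) ^ (f i).index
              = ⟨z ^ (f i).index, MonoidHom.transfer_eq_pow_aux z key⟩ := by
            ext
            simp
          rw [this, ← hker]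
        have hfo : IsOfFinOrder (Abelianization.of (⟨z, ih⟩ : f i)) :=
          isOfFinOrder_iff_pow_eq_one.mpr
            ⟨(f i).index, Nat.pos_of_ne_zero (hfin i).index_ne_zero, hpow⟩
        exact hstep i ⟨z, ih⟩ hfo
    have : z ∈ (⊥ : Subgroup G) := hinf ▸ Subgroup.mem_iInf.mpr hall
    exact hzne1 (Subgroup.mem_bot.mp this)
  intro x y
  have : ⁅x, y⁆ ∈ commutator G := Subgroup.commutator_mem_commutator trivial trivial
  rw [hbot] at this
  exact commutatorElement_eq_one_iff_mul_comm.mp (Subgroup.mem_bot.mp this)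

/-- A finitely generated nilpotent group is either virtually abelian or not virtually RFRS:
if it is virtually RFRS, then it is virtually abelian. -/
theorem fg_nilpotent_virtually_RFRS_implies_virtually_abelian
    (N : Type*) [Group N] (hfg : Group.FG N) (hnilp : Group.IsNilpotent N)
    (hRFRS : ∃ H : Subgroup N, H.FiniteIndex ∧ IsRFRS H) :
    ∃ A : Subgroup N, A.FiniteIndex ∧ ∀ x y : A, x * y = y * x := by
  obtain ⟨H, hHfin, hH⟩ := hRFRS
  haveI := hnilp
  exact ⟨H, hHfin, rfrs_nilpotent_comm hH⟩
end

section
/- Let G be a virtually RFRS group. Then G does not contain a nonabelian torsion-free nilpotent subgroup; that is, every torsion-free nilpotent subgroup of G is abelian. -/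
open scoped commutatorElement

/-- A virtually RFRS group contains no nonabelian torsion-free nilpotent subgroup:
every torsion-free nilpotent subgroup is abelian. -/
theorem virtually_RFRS_no_nonabelian_torsionfree_nilpotent_subgroup
    (G : Type*) [Group G] (hRFRS : ∃ H : Subgroup G, H.FiniteIndex ∧ IsRFRS H)
    (N : Subgroup G) (htf : ∀ g : N, g ≠ 1 → ¬IsOfFinOrder g) (hnilp : Group.IsNilpotent N) :
    ∀ x y : N, x * y = y * x := by
  classical
  by_contra hcon
  push_neg at hcon
  obtain ⟨x, y, hxy⟩ := hcon
  obtain ⟨H, hHfi, f, hf0, hfnorm, hffi, hfle, hfinf, hfstep⟩ := hRFRS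
  haveI := hHfi
  -- the commutator ⁅x,y⁆ is a nontrivial element of the commutator subgroup
  have hc : (⁅x, y⁆ : ↥N) ≠ 1 := fun h => hxy (commutatorElement_eq_one_iff_commute.mp h)
  haveI : Nontrivial ↥N := ⟨⁅x, y⁆, 1, hc⟩
  -- find a nontrivial element z in the last nontrivial term of the lower central series
  have hex : ∃ n, (⊤ : Subgroup ↥N).lowerCentralSeries n = ⊥ := nilpotent_iff_lowerCentralSeries.mp hnilp
  set n0 := Nat.find hex with hn0def
  have hn0 : (⊤ : Subgroup ↥N).lowerCentralSeries n0 = ⊥ := Nat.find_spec hex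
  have hn1 : n0 ≠ 0 := by
    intro h
    rw [h] at hn0
    simp only [lowerCentralSeries_zero] at hn0
    exact top_ne_bot hn0
  have hn2 : n0 ≠ 1 := by
    intro h
    rw [h, lowerCentralSeries_one] at hn0
    have hmem : (⁅x, y⁆ : ↥N) ∈ commutator ↥N := by
      rw [commutator_def]
      exact Subgroup.commutator_mem_commutator (Subgroup.mem_top x) (Subgroup.mem_top y)
    rw [hn0] at hmem
    exact hc hmem
  set c := n0 - 1 with hcdef
  have hc1 : 1 ≤ c := by omega
  have hcsucc : c + 1 = n0 := by omega
  have hlcsc : (⊤ : Subgroup ↥N).lowerCentralSeries c ≠ ⊥ := Nat.find_min hex (by omega)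
  obtain ⟨z, hzne⟩ := Subgroup.ne_bot_iff_exists_ne_one.mp hlcsc
  have hzmem : (z : ↥N) ∈ (⊤ : Subgroup ↥N).lowerCentralSeries c := z.2
  -- z is central
  have hzcent : ∀ g : ↥N, Commute g (z : ↥N) := by
    intro g
    have hmem : ⁅(z : ↥N), g⁆ ∈ (⊤ : Subgroup ↥N).lowerCentralSeries (c + 1) := by
      rw [lowerCentralSeries_succ]
      exact Subgroup.commutator_mem_commutator hzmem (Subgroup.mem_top g)
    rw [hcsucc, hn0] at hmem
    have h1 : ⁅(z : ↥N), g⁆ = 1 := hmem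
    exact (commutatorElement_eq_one_iff_commute.mp h1).symm
  -- z is in the commutator subgroup
  have hzcomm : (z : ↥N) ∈ commutator ↥N := by
    rw [← lowerCentralSeries_one]
    exact lowerCentralSeries_antitone _ hc1 hzmem
  -- replace z by a power w lying in H
  haveI : H.normalCore.FiniteIndex := Subgroup.finiteIndex_normalCore H
  set m := H.normalCore.index with hmdef
  have hm0 : m ≠ 0 := Subgroup.FiniteIndex.index_ne_zero
  set w : ↥N := (z : ↥N) ^ m with hwdef
  have hwH : (w : G) ∈ H := by
    have h1 : ((z : ↥N) : G) ^ m ∈ H.normalCore := Subgroup.pow_index_mem H.normalCore _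
    have h2 : (w : G) = ((z : ↥N) : G) ^ m := by
      rw [hwdef]; exact SubgroupClass.coe_pow _ _
    rw [h2]
    exact H.normalCore_le h1
  have hwne : w ≠ 1 := by
    intro h
    have : IsOfFinOrder ((z : ↥N) : ↥N) :=
      isOfFinOrder_iff_pow_eq_one.mpr ⟨m, Nat.pos_of_ne_zero hm0, h⟩
    exact htf (z : ↥N) (fun h' => hzne (Subtype.ext h')) this
  have hwcent : ∀ g : ↥N, Commute g w := fun g => (hzcent g).pow_right m
  have hwcomm : w ∈ commutator ↥N := (commutator ↥N).pow_mem hzcomm m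
  -- the main induction along the RFRS chain
  have key : ∀ i, (⟨(w : G), hwH⟩ : ↥H) ∈ f i := by
    intro i
    induction i with
    | zero => rw [hf0]; exact Subgroup.mem_top _
    | succ i ih =>
      -- the subgroup of G corresponding to f i
      set Hi : Subgroup G := (f i).map H.subtype with hHidef
      have hHile : Hi ≤ H := Subgroup.map_subtype_le _
      -- Hi has finite index in G
      haveI : Hi.FiniteIndex := by
        constructor
        have h1 : Hi.relIndex H * H.index = Hi.index := Subgroup.relIndex_mul_index hHile
        have h2 : Hi.relIndex H = (f i).index := by
          rw [Subgroup.relIndex]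
          congr 1
          rw [hHidef, Subgroup.subgroupOf, Subgroup.comap_map_eq_self_of_injective
            H.subtype_injective]
        rw [← h1, h2]
        exact Nat.mul_ne_zero (hffi i).index_ne_zero hHfi.index_ne_zero
      set Ki : Subgroup ↥N := Hi.subgroupOf N with hKidef
      haveI : Ki.FiniteIndex := Subgroup.instFiniteIndex_subgroupOf Hi N
      set n := Ki.index with hndef
      have hn0' : n ≠ 0 := Subgroup.FiniteIndex.index_ne_zero
      have hwKi : w ∈ Ki := by
        rw [hKidef, Subgroup.mem_subgroupOf]
        exact Subgroup.mem_map.mpr ⟨⟨(w : G), hwH⟩, ih, rfl⟩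
      -- transfer homomorphism
      set φ : ↥Ki →* Abelianization ↥Ki := Abelianization.of with hφdef
      have hkey : ∀ (k : ℕ) (g₀ : ↥N), g₀⁻¹ * w ^ k * g₀ ∈ Ki → g₀⁻¹ * w ^ k * g₀ = w ^ k := by
        intro k g₀ _
        have hcw : Commute g₀⁻¹ (w ^ k) := ((hwcent g₀⁻¹).pow_right k)
        rw [hcw.eq, mul_assoc, inv_mul_cancel, mul_one]
      have ht : MonoidHom.transfer φ w = φ ⟨w ^ n, MonoidHom.transfer_eq_pow_aux w hkey⟩ :=
        MonoidHom.transfer_eq_pow φ w hkey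
      have htker : MonoidHom.transfer φ w = 1 :=
        Abelianization.commutator_subset_ker (MonoidHom.transfer φ) hwcomm
      -- so the image of w^n in the abelianization of Ki is trivial
      have habKi : φ ((⟨w, hwKi⟩ : ↥Ki) ^ n) = 1 := by
        have : ((⟨w, hwKi⟩ : ↥Ki) ^ n) = ⟨w ^ n, MonoidHom.transfer_eq_pow_aux w hkey⟩ :=
          Subtype.ext (SubgroupClass.coe_pow _ _)
        rw [this, ← ht, htker]
      -- the homomorphism from Ki to f i
      have hmemfi : ∀ k : ↥Ki, ∀ hH' : ((k : ↥N) : G) ∈ H, (⟨((k : ↥N) : G), hH'⟩ : ↥H) ∈ f i := by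
        intro k hH'
        obtain ⟨a, ha, haeq⟩ := Subgroup.mem_map.mp (Subgroup.mem_subgroupOf.mp k.2)
        have : (⟨((k : ↥N) : G), hH'⟩ : ↥H) = a := Subtype.ext haeq.symm
        rw [this]
        exact ha
      set ψ : ↥Ki →* ↥(f i) :=
        { toFun := fun k => ⟨⟨((k : ↥N) : G), hHile (Subgroup.mem_subgroupOf.mp k.2)⟩,
            hmemfi k _⟩
          map_one' := by ext; rfl
          map_mul' := fun a b => by ext; rfl } with hψdef
      set u : ↥(f i) := ψ ⟨w, hwKi⟩ with hudef
      have hfin : IsOfFinOrder (Abelianization.of u) := by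
        refine isOfFinOrder_iff_pow_eq_one.mpr ⟨n, Nat.pos_of_ne_zero hn0', ?_⟩
        have h1 : (Abelianization.of u) ^ n = Abelianization.of (u ^ n) := (map_pow _ _ _).symm
        have h2 : u ^ n = ψ ((⟨w, hwKi⟩ : ↥Ki) ^ n) := (map_pow ψ _ _).symm
        rw [h1, h2, ← Abelianization.map_of ψ, habKi, map_one]
      have hmem := hfstep i u hfin
      have huval : (u : ↥H) = ⟨(w : G), hwH⟩ := rfl
      rw [huval] at hmem
      exact hmem
  -- conclude: w lies in the intersection, hence is trivial
  have hmeminf : (⟨(w : G), hwH⟩ : ↥H) ∈ ⨅ i, f i := Subgroup.mem_iInf.mpr key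
  rw [hfinf, Subgroup.mem_bot] at hmeminf
  have : (w : G) = 1 := congrArg Subtype.val hmeminf
  exact hwne (Subtype.ext this)
end

section
/- The integer Heisenberg group, i.e., the group of upper unitriangular 3×3 matrices with integer entries, is not virtually RFRS (in particular, it is not RFRS). -/
/-- The integer Heisenberg group: the group of upper unitriangular `3 × 3` integer
matrices, realized as the subgroup of invertible `3 × 3` integer matrices whose
diagonal entries are `1` and whose below-diagonal entries vanish. -/
def Heisenberg : Subgroup (Matrix (Fin 3) (Fin 3) ℤ)ˣ where
  carrier := {A | (A : Matrix (Fin 3) (Fin 3) ℤ) 0 0 = 1 ∧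
    (A : Matrix (Fin 3) (Fin 3) ℤ) 1 1 = 1 ∧ (A : Matrix (Fin 3) (Fin 3) ℤ) 2 2 = 1 ∧
    (A : Matrix (Fin 3) (Fin 3) ℤ) 1 0 = 0 ∧ (A : Matrix (Fin 3) (Fin 3) ℤ) 2 0 = 0 ∧
    (A : Matrix (Fin 3) (Fin 3) ℤ) 2 1 = 0}
  one_mem' := by
    refine ⟨?_, ?_, ?_, ?_, ?_, ?_⟩ <;> simp [Matrix.one_apply]
  mul_mem' := by
    rintro A B ⟨a00, a11, a22, a10, a20, a21⟩ ⟨b00, b11, b22, b10, b20, b21⟩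
    refine ⟨?_, ?_, ?_, ?_, ?_, ?_⟩ <;>
      simp [Matrix.mul_apply, Fin.sum_univ_three, a00, a11, a22, a10, a20, a21,
        b00, b11, b22, b10, b20, b21]
  inv_mem' := by
    rintro A ⟨a00, a11, a22, a10, a20, a21⟩
    have hinv : (↑A⁻¹ : Matrix (Fin 3) (Fin 3) ℤ) =
        !![1, -((A : Matrix (Fin 3) (Fin 3) ℤ) 0 1),
            (A : Matrix (Fin 3) (Fin 3) ℤ) 0 1 * (A : Matrix (Fin 3) (Fin 3) ℤ) 1 2 -
              (A : Matrix (Fin 3) (Fin 3) ℤ) 0 2;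
           0, 1, -((A : Matrix (Fin 3) (Fin 3) ℤ) 1 2);
           0, 0, 1] := by
      refine Units.inv_eq_of_mul_eq_one_right ?_
      ext i j
      fin_cases i <;> fin_cases j <;>
        simp [Matrix.mul_apply, Fin.sum_univ_three, Matrix.one_apply,
          Matrix.vecHead, Matrix.vecTail, a00, a11, a22, a10, a20, a21] <;> ring_nf
    refine ⟨?_, ?_, ?_, ?_, ?_, ?_⟩ <;> simp [hinv, Matrix.vecHead, Matrix.vecTail]

def Emat (a b c : ℤ) : (Matrix (Fin 3) (Fin 3) ℤ)ˣ where
  val := !![1, a, c; 0, 1, b; 0, 0, 1]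
  inv := !![1, -a, a*b - c; 0, 1, -b; 0, 0, 1]
  val_inv := by
    ext i j
    fin_cases i <;> fin_cases j <;>
      simp [Matrix.mul_apply, Fin.sum_univ_three, Matrix.one_apply, Matrix.vecHead, Matrix.vecTail] <;> ring
  inv_val := by
    ext i j
    fin_cases i <;> fin_cases j <;>
      simp [Matrix.mul_apply, Fin.sum_univ_three, Matrix.one_apply, Matrix.vecHead, Matrix.vecTail] <;> ring

theorem Emat_mul (a b c a' b' c' : ℤ) :
    Emat a b c * Emat a' b' c' = Emat (a + a') (b + b') (c + c' + a * b') := by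
  ext i j
  fin_cases i <;> fin_cases j <;>
    simp [Emat, Matrix.mul_apply, Fin.sum_univ_three, Matrix.vecHead, Matrix.vecTail] <;> ring

theorem Emat_zero : Emat 0 0 0 = 1 := by
  ext i j
  fin_cases i <;> fin_cases j <;> simp [Emat, Matrix.one_apply, Matrix.vecHead, Matrix.vecTail]

theorem Emat_inv (a b c : ℤ) : (Emat a b c)⁻¹ = Emat (-a) (-b) (a*b - c) := by
  ext i j
  fin_cases i <;> fin_cases j <;> simp [Emat, Matrix.one_apply, Matrix.vecHead, Matrix.vecTail]

theorem Emat_inj {c c' : ℤ} (h : Emat 0 0 c = Emat 0 0 c') : c = c' := by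
  have := congrArg (fun u : (Matrix (Fin 3) (Fin 3) ℤ)ˣ => (u.val : Matrix (Fin 3) (Fin 3) ℤ) 0 2) h
  simpa [Emat] using this

theorem Emat_x_pow (a : ℤ) (n : ℕ) : (Emat a 0 0) ^ n = Emat (n * a) 0 0 := by
  induction n with
  | zero => simpa using Emat_zero.symm
  | succ n ih => rw [pow_succ, ih, Emat_mul]; congr 1 <;> push_cast <;> ring

theorem Emat_y_pow (b : ℤ) (n : ℕ) : (Emat 0 b 0) ^ n = Emat 0 (n * b) 0 := by
  induction n with
  | zero => simpa using Emat_zero.symm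
  | succ n ih => rw [pow_succ, ih, Emat_mul]; congr 1 <;> push_cast <;> ring

theorem Emat_z_pow (c : ℤ) (n : ℕ) : (Emat 0 0 c) ^ n = Emat 0 0 (n * c) := by
  induction n with
  | zero => simpa using Emat_zero.symm
  | succ n ih => rw [pow_succ, ih, Emat_mul]; congr 1 <;> push_cast <;> ring

open scoped commutatorElement

theorem Emat_comm (a b : ℤ) : ⁅Emat a 0 0, Emat 0 b 0⁆ = Emat 0 0 (a * b) := by
  rw [commutatorElement_def, Emat_inv, Emat_inv, Emat_mul, Emat_mul, Emat_mul]
  congr 1 <;> ring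

theorem Emat_mem (a b c : ℤ) : Emat a b c ∈ Heisenberg := by
  refine ⟨?_, ?_, ?_, ?_, ?_, ?_⟩ <;> simp [Emat, Matrix.vecHead, Matrix.vecTail]

/-- The integer Heisenberg group is not virtually RFRS (in particular it is not RFRS). -/
theorem heisenberg_not_virtually_RFRS :
    ¬ ∃ H : Subgroup Heisenberg, H.FiniteIndex ∧ IsRFRS H := by
  rintro ⟨H, hHfi, f, hf0, hnorm, hfifin, hdesc, hinf, hstep⟩
  haveI := hHfi
  set k := H.normalCore.index with hk
  have hk0 : k ≠ 0 := Subgroup.FiniteIndex.index_ne_zero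
  set zH : Heisenberg := ⟨Emat 0 0 1, Emat_mem 0 0 1⟩ with hzH
  set xH : Heisenberg := ⟨Emat 1 0 0, Emat_mem 1 0 0⟩ with hxH
  set yH : Heisenberg := ⟨Emat 0 1 0, Emat_mem 0 1 0⟩ with hyH
  have hzk : zH ^ k ∈ H := H.normalCore_le (H.normalCore.pow_index_mem zH)
  set g : H := ⟨zH ^ k, hzk⟩ with hg
  have key : ∀ i, g ∈ f i := by
    intro i
    induction i with
    | zero => rw [hf0]; trivial
    | succ i ih =>
      refine hstep i ⟨g, ih⟩ ?_
      haveI : (f i).FiniteIndex := hfifin i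
      set K : Subgroup Heisenberg := (f i).map H.subtype with hK
      haveI : K.FiniteIndex := by
        constructor
        rw [hK, Subgroup.index_map_subtype]
        exact Nat.mul_ne_zero Subgroup.FiniteIndex.index_ne_zero Subgroup.FiniteIndex.index_ne_zero
      set N := K.normalCore.index with hN
      have hN0 : N ≠ 0 := Subgroup.FiniteIndex.index_ne_zero
      have hxK : xH ^ N ∈ K := K.normalCore_le (K.normalCore.pow_index_mem xH)
      have hyK : yH ^ N ∈ K := K.normalCore_le (K.normalCore.pow_index_mem yH)
      -- the key commutator identity at the level of `Heisenberg`
      have hcomm : ⁅(xH ^ N) ^ k, yH ^ N⁆ = (g : Heisenberg) ^ (N * N) := by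
        refine Subtype.ext ?_
        show ⁅((Emat 1 0 0) ^ N) ^ k, (Emat 0 1 0) ^ N⁆ = ((Emat 0 0 1) ^ k) ^ (N * N)
        rw [Emat_x_pow, Emat_y_pow, Emat_z_pow, Emat_x_pow, Emat_z_pow, Emat_comm]
        congr 1
        push_cast
        ring
      set φ : ↥(f i) →* Heisenberg := H.subtype.comp (f i).subtype with hφ
      have hφinj : Function.Injective φ :=
        H.subtype_injective.comp (f i).subtype_injective
      have hrange : (commutator ↥(f i)).map φ = ⁅K, K⁆ := by
        rw [commutator_def, Subgroup.map_commutator, ← MonoidHom.range_eq_map, hφ,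
          MonoidHom.range_comp, Subgroup.range_subtype, hK]
      set g' : ↥(f i) := ⟨g, ih⟩ with hg'
      have hmem : φ (g' ^ (N * N)) ∈ ⁅K, K⁆ := by
        have : φ (g' ^ (N * N)) = ⁅(xH ^ N) ^ k, yH ^ N⁆ := by
          rw [hcomm]; rfl
        rw [this]
        exact Subgroup.commutator_mem_commutator (pow_mem hxK k) hyK
      rw [← hrange] at hmem
      obtain ⟨w, hw, hweq⟩ := Subgroup.mem_map.mp hmem
      have hwmem : g' ^ (N * N) ∈ commutator ↥(f i) := by
        rwa [hφinj hweq] at hw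
      refine isOfFinOrder_iff_pow_eq_one.mpr ⟨N * N, Nat.pos_of_ne_zero (Nat.mul_ne_zero hN0 hN0), ?_⟩
      rw [← map_pow]
      exact (QuotientGroup.eq_one_iff _).mpr hwmem
  have : g ∈ ⨅ i, f i := Subgroup.mem_iInf.mpr key
  rw [hinf, Subgroup.mem_bot] at this
  have h0 : zH ^ k = (1 : Heisenberg) := congrArg Subtype.val this
  have h1 : (Emat 0 0 1) ^ k = 1 := congrArg Subtype.val h0
  rw [Emat_z_pow, ← Emat_zero] at h1
  have h2 := Emat_inj h1
  simp only [mul_one, Int.natCast_eq_zero] at h2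
  exact hk0 h2
end
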